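/- arXiv:2102.07720 — 5 statements merged into one kernel-verified Lean document; each statement's English description precedes it below -/
import Mathlib

section
/- For the linear path between π_0 = N(μ_0, σ²) and π_1 = N(μ_1, σ²), the instantaneous rejection rate satisfies λ(t) = z/√π for all t ∈ [0,1], where z = |μ_1 - μ_0|/σ, and hence the global communication barrier Λ = ∫_0^1 λ(t) dt = z/√π. -/
open scoped NNReal ENNReal
open MeasureTheory ProbabilityTheory Real Set

section GaussBarrierAux

lemma aux_Ioi {b : ℝ} (hb : 0 < b) :
    ∫ x in Set.Ioi (0:ℝ), x * rexp (-b * x ^ 2) = (2 * b)⁻¹ := by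
  have hderiv : ∀ x ∈ Set.Ici (0:ℝ),
      HasDerivAt (fun x : ℝ => -(2*b)⁻¹ * rexp (-b * x ^ 2)) (x * rexp (-b * x ^ 2)) x := by
    intro x _
    have h1 : HasDerivAt (fun x : ℝ => -b * x ^ 2) (-b * (2 * x)) x := by
      simpa using ((hasDerivAt_pow 2 x).const_mul (-b))
    have h2 := (h1.exp).const_mul (-(2*b)⁻¹)
    refine h2.congr_deriv ?_
    field_simp
  have hint : IntegrableOn (fun x : ℝ => x * rexp (-b * x ^ 2)) (Set.Ioi 0) :=
    (integrable_mul_exp_neg_mul_sq hb).integrableOn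
  have htend : Filter.Tendsto (fun x : ℝ => -(2*b)⁻¹ * rexp (-b * x ^ 2))
      Filter.atTop (nhds 0) := by
    have : Filter.Tendsto (fun x : ℝ => rexp (-b * x ^ 2)) Filter.atTop (nhds 0) := by
      apply Real.tendsto_exp_atBot.comp
      apply Filter.Tendsto.const_mul_atTop_of_neg (by linarith : -b < 0)
      exact Filter.tendsto_pow_atTop (by norm_num)
    simpa using this.const_mul (-(2*b)⁻¹)
  have := integral_Ioi_of_hasDerivAt_of_tendsto' hderiv hint htend
  simp only [ne_eq, OfNat.ofNat_ne_zero, not_false_eq_true, zero_pow, mul_zero, Real.exp_zero] at this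
  rw [this]
  ring_nf

lemma aux_abs {b : ℝ} (hb : 0 < b) :
    ∫ x : ℝ, |x| * rexp (-b * x ^ 2) = b⁻¹ := by
  have h1 : (fun x : ℝ => |x| * rexp (-b * x ^ 2))
      = fun x : ℝ => |x| * rexp (-b * |x| ^ 2) := by
    ext x; rw [sq_abs]
  rw [h1, integral_comp_abs (f := fun x : ℝ => x * rexp (-b * x ^ 2)),
    aux_Ioi hb]
  field_simp

lemma gauss_shift (b a : ℝ) : ∫ x : ℝ, rexp (-b * (x - a) ^ 2) = Real.sqrt (π / b) := by
  rw [← integral_gaussian b]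
  exact integral_sub_right_eq_self (fun x => rexp (-b * x ^ 2)) a

lemma integral_gaussianReal_eq (m : ℝ) {v : ℝ≥0} (hv : v ≠ 0) (g : ℝ → ℝ) :
    ∫ x, g x ∂(gaussianReal m v) = ∫ x, gaussianPDFReal m v x * g x := by
  rw [gaussianReal_of_var_ne_zero m hv]
  have h1 : gaussianPDF m v = fun x => ((gaussianPDFReal m v x).toNNReal : ℝ≥0∞) := rfl
  rw [h1, integral_withDensity_eq_integral_smul
    ((measurable_gaussianPDFReal m v).real_toNNReal) g]
  congr 1
  ext x
  rw [NNReal.smul_def, Real.coe_toNNReal _ (gaussianPDFReal_nonneg m v x)]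
  rfl

lemma gaussianPDFReal_eq (m : ℝ) (v : ℝ≥0) (x : ℝ) :
    gaussianPDFReal m v x
      = (Real.sqrt (2 * π * v))⁻¹ * rexp (-(2 * (v:ℝ))⁻¹ * (x - m) ^ 2) := by
  rw [gaussianPDFReal]
  congr 1
  ring

lemma integrable_abs_mul_gaussianPDFReal (m : ℝ) {v : ℝ≥0} (hv : 0 < (v:ℝ)) :
    Integrable (fun x => |x| * gaussianPDFReal m v x) := by
  set b : ℝ := (2 * (v:ℝ))⁻¹ with hb
  have hb0 : 0 < b := by positivity
  set c : ℝ := (Real.sqrt (2 * π * v))⁻¹ with hc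
  have hc0 : 0 ≤ c := by positivity
  have h1 : Integrable (fun y : ℝ => |y| * rexp (-b * y ^ 2)) := by
    have h := (integrable_mul_exp_neg_mul_sq hb0).abs
    have he : (fun y : ℝ => |y * rexp (-b * y ^ 2)|) = fun y : ℝ => |y| * rexp (-b * y ^ 2) := by
      funext y
      rw [abs_mul, abs_of_nonneg (Real.exp_nonneg _)]
    rwa [he] at h
  have h2 : Integrable (fun y : ℝ => rexp (-b * y ^ 2)) := integrable_exp_neg_mul_sq hb0
  have key : Integrable (fun y : ℝ => (|y| + |m|) * (c * rexp (-b * y ^ 2))) := by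
    have h3 := (h1.const_mul c).add (h2.const_mul (|m| * c))
    exact h3.congr (Filter.Eventually.of_forall fun y => by simp only [Pi.add_apply]; ring)
  have key2 := key.comp_sub_right m
  refine key2.mono' ((measurable_id.abs.mul (measurable_gaussianPDFReal m v)).aestronglyMeasurable) ?_
  filter_upwards with x
  have hfx : gaussianPDFReal m v x = c * rexp (-b * (x - m) ^ 2) := gaussianPDFReal_eq m v x
  have hxb : |x| ≤ |x - m| + |m| := by
    calc |x| = |(x - m) + m| := by ring_nf
    _ ≤ |x - m| + |m| := abs_add_le _ _
  have hf0 : 0 ≤ gaussianPDFReal m v x := gaussianPDFReal_nonneg m v x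
  rw [Real.norm_eq_abs, abs_mul, abs_abs, abs_of_nonneg hf0, hfx]
  exact mul_le_mul_of_nonneg_right hxb (by positivity)

/-- The shear `(x, y) ↦ (x, x - y)` as a measurable equivalence (it is an involution). -/
def shearT : (ℝ × ℝ) ≃ᵐ (ℝ × ℝ) where
  toFun := fun z => (z.1, z.1 - z.2)
  invFun := fun z => (z.1, z.1 - z.2)
  left_inv := fun z => by simp
  right_inv := fun z => by simp
  measurable_toFun := measurable_fst.prodMk (measurable_fst.sub measurable_snd)
  measurable_invFun := measurable_fst.prodMk (measurable_fst.sub measurable_snd)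

lemma shearT_measurePreserving :
    MeasurePreserving (fun z : ℝ × ℝ => (z.1, z.1 - z.2))
      ((volume : Measure ℝ).prod volume) ((volume : Measure ℝ).prod volume) := by
  have h1 := measurePreserving_prod_neg_add (volume : Measure ℝ) (volume : Measure ℝ)
  have h2 : MeasurePreserving (Prod.map (id : ℝ → ℝ) (Neg.neg : ℝ → ℝ))
      ((volume : Measure ℝ).prod volume) ((volume : Measure ℝ).prod volume) :=
    (MeasurePreserving.id volume).prod (Measure.measurePreserving_neg volume)
  have h3 := h2.comp h1
  have he : (Prod.map (id : ℝ → ℝ) (Neg.neg : ℝ → ℝ)) ∘ (fun z : ℝ × ℝ => (z.1, -z.1 + z.2))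
      = fun z : ℝ × ℝ => (z.1, z.1 - z.2) := by
    funext z
    simp [Prod.map, Function.comp]
    ring
  rwa [he] at h3

lemma core_integral (m : ℝ) {v : ℝ≥0} (hv : 0 < (v:ℝ)) :
    ∫ x, ∫ y, |x - y| ∂(gaussianReal m v) ∂(gaussianReal m v)
      = 2 * Real.sqrt v / Real.sqrt π := by
  have hv0 : v ≠ 0 := fun h => by simp [h] at hv
  set f := gaussianPDFReal m v with hfdef
  set b : ℝ := (2 * (v:ℝ))⁻¹ with hb
  have hb0 : 0 < b := by positivity
  set c : ℝ := (Real.sqrt (2 * π * v))⁻¹ with hc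
  have hfx : ∀ x, f x = c * rexp (-b * (x - m) ^ 2) := gaussianPDFReal_eq m v
  have hf0 : ∀ x, 0 ≤ f x := gaussianPDFReal_nonneg m v
  have hfm : Measurable f := measurable_gaussianPDFReal m v
  have hfi : Integrable f := integrable_gaussianPDFReal m v
  have hfai : Integrable (fun x => |x| * f x) := integrable_abs_mul_gaussianPDFReal m hv
  set F : ℝ × ℝ → ℝ := fun z => f z.1 * (f z.2 * |z.1 - z.2|) with hF
  -- Step 1 : rewrite the gaussian integrals as Lebesgue integrals with density
  have step1 : ∫ x, ∫ y, |x - y| ∂(gaussianReal m v) ∂(gaussianReal m v)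
      = ∫ x, ∫ y, F (x, y) := by
    rw [integral_gaussianReal_eq m hv0]
    refine integral_congr_ae (Filter.Eventually.of_forall fun x => ?_)
    show gaussianPDFReal m v x * (∫ y, |x - y| ∂(gaussianReal m v)) = ∫ y, F (x, y)
    rw [integral_gaussianReal_eq m hv0 (fun y => |x - y|), ← integral_const_mul]
  -- Integrability of F on the product space
  have hFmeas : AEStronglyMeasurable F ((volume : Measure ℝ).prod volume) :=
    ((hfm.comp measurable_fst).mul ((hfm.comp measurable_snd).mul
      (measurable_fst.sub measurable_snd).abs)).aestronglyMeasurable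
  have hFint : Integrable F ((volume : Measure ℝ).prod volume) := by
    have hbound := (hfai.mul_prod hfi).add (hfi.mul_prod hfai)
    refine hbound.mono' hFmeas ?_
    filter_upwards with z
    have h1 : |z.1 - z.2| ≤ |z.1| + |z.2| := abs_sub _ _
    have hx := hf0 z.1; have hy := hf0 z.2
    simp only [hF, Pi.add_apply, Real.norm_eq_abs]
    rw [abs_of_nonneg (mul_nonneg hx (mul_nonneg hy (abs_nonneg _)))]
    nlinarith [mul_le_mul_of_nonneg_left h1 (mul_nonneg hx hy)]
  -- Step 2 : Fubini and the shear change of variables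
  have hTemb : MeasurableEmbedding (fun z : ℝ × ℝ => (z.1, z.1 - z.2)) :=
    shearT.measurableEmbedding
  have hFT : Integrable (fun z : ℝ × ℝ => F (z.1, z.1 - z.2))
      ((volume : Measure ℝ).prod volume) := by
    have hmap : Integrable F (Measure.map (fun z : ℝ × ℝ => (z.1, z.1 - z.2))
        ((volume : Measure ℝ).prod volume)) := by
      rw [shearT_measurePreserving.map_eq]; exact hFint
    exact (hTemb.integrable_map_iff).mp hmap
  have step2 : ∫ x, ∫ y, F (x, y) = ∫ s, ∫ x, F (x, x - s) := by
    calc ∫ x, ∫ y, F (x, y) = ∫ z, F z ∂((volume : Measure ℝ).prod volume) :=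
          integral_integral hFint
    _ = ∫ z : ℝ × ℝ, F (z.1, z.1 - z.2) ∂((volume : Measure ℝ).prod volume) :=
          (shearT_measurePreserving.integral_comp hTemb F).symm
    _ = ∫ s, ∫ x, F (x, x - s) := integral_prod_symm _ hFT
  -- Step 3 : compute the inner integral
  have step3 : ∀ s : ℝ, ∫ x, F (x, x - s)
      = (c ^ 2 * Real.sqrt (π * v)) * (|s| * rexp (-(b / 2) * s ^ 2)) := by
    intro s
    have hpt : ∀ x, F (x, x - s)
        = (|s| * (c ^ 2 * rexp (-(b / 2) * s ^ 2))) * rexp (-(2 * b) * (x - (m + s / 2)) ^ 2) := by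
      intro x
      have habs : |x - (x - s)| = |s| := by congr 1; ring
      simp only [hF]
      rw [habs, hfx, hfx]
      have hexp : rexp (-b * (x - m) ^ 2) * rexp (-b * (x - s - m) ^ 2)
          = rexp (-(b / 2) * s ^ 2) * rexp (-(2 * b) * (x - (m + s / 2)) ^ 2) := by
        rw [← Real.exp_add, ← Real.exp_add]; congr 1; ring
      linear_combination (c ^ 2 * |s|) * hexp
    calc ∫ x, F (x, x - s)
        = ∫ x, (|s| * (c ^ 2 * rexp (-(b / 2) * s ^ 2)))
            * rexp (-(2 * b) * (x - (m + s / 2)) ^ 2) := by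
          exact integral_congr_ae (Filter.Eventually.of_forall hpt)
    _ = (|s| * (c ^ 2 * rexp (-(b / 2) * s ^ 2))) * Real.sqrt (π / (2 * b)) := by
          rw [integral_const_mul, gauss_shift]
    _ = (c ^ 2 * Real.sqrt (π * v)) * (|s| * rexp (-(b / 2) * s ^ 2)) := by
          rw [show π / (2 * b) = π * v by rw [hb]; field_simp]
          ring
  -- Step 4 : compute the outer integral
  have step4 : ∫ s, ∫ x, F (x, x - s)
      = (c ^ 2 * Real.sqrt (π * v)) * (b / 2)⁻¹ := by
    calc ∫ s, ∫ x, F (x, x - s)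
        = ∫ s, (c ^ 2 * Real.sqrt (π * v)) * (|s| * rexp (-(b / 2) * s ^ 2)) :=
          integral_congr_ae (Filter.Eventually.of_forall step3)
    _ = (c ^ 2 * Real.sqrt (π * v)) * ∫ s, |s| * rexp (-(b / 2) * s ^ 2) :=
          integral_const_mul _ _
    _ = (c ^ 2 * Real.sqrt (π * v)) * (b / 2)⁻¹ := by
          rw [aux_abs (by positivity : (0:ℝ) < b / 2)]
  -- Final arithmetic
  rw [step1, step2, step4]
  have hπ : 0 < π := pi_pos
  have hc2 : c ^ 2 = (2 * π * (v:ℝ))⁻¹ := by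
    rw [hc, ← Real.sqrt_inv, Real.sq_sqrt (by positivity)]
  have hbinv : (b / 2)⁻¹ = 4 * (v:ℝ) := by rw [hb]; field_simp; ring
  rw [hc2, hbinv, Real.sqrt_mul (le_of_lt hπ)]
  have hsπ : Real.sqrt π > 0 := Real.sqrt_pos.mpr hπ
  have hsv : Real.sqrt (v:ℝ) > 0 := Real.sqrt_pos.mpr hv
  have hπ' : Real.sqrt π ^ 2 = π := Real.sq_sqrt (le_of_lt hπ)
  have hv' : Real.sqrt (v:ℝ) ^ 2 = (v:ℝ) := Real.sq_sqrt (le_of_lt hv)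
  field_simp
  linear_combination 4 * hπ'

end GaussBarrierAux


/-- For the linear path between `N(μ0,σ²)` and `N(μ1,σ²)`, the instantaneous rejection
rate `λ(t) = (1/2) E[|dW_t/dt(X_t) - dW_t/dt(X'_t)|]`, with `X_t, X'_t` i.i.d. from
`π_t = N((1-t)μ0 + tμ1, σ²)` and `dW_t/dt(x) = (μ1-μ0)(x - (μ0+μ1)/2)/σ²`, equals
`z/√π` for all `t ∈ [0,1]` where `z = |μ1-μ0|/σ`; hence the global communication
barrier `Λ = ∫_0^1 λ(t) dt = z/√π`. -/
theorem linear_path_gaussian_communication_barrier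
    (μ0 μ1 σ : ℝ) (hσ : 0 < σ) (lam : ℝ → ℝ)
    (hlam : ∀ t : ℝ, lam t =
      (1/2) * ∫ x, ∫ y,
        |(μ1 - μ0) * (x - (μ0 + μ1)/2) / σ^2 - (μ1 - μ0) * (y - (μ0 + μ1)/2) / σ^2|
          ∂(gaussianReal ((1 - t) * μ0 + t * μ1) (Real.toNNReal (σ^2)))
          ∂(gaussianReal ((1 - t) * μ0 + t * μ1) (Real.toNNReal (σ^2)))) :
    (∀ t ∈ Set.Icc (0:ℝ) 1, lam t = (|μ1 - μ0| / σ) / Real.sqrt Real.pi) ∧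
    (∫ t in (0:ℝ)..1, lam t) = (|μ1 - μ0| / σ) / Real.sqrt Real.pi := by
  have hσ2 : (0:ℝ) < ((Real.toNNReal (σ^2) : ℝ≥0) : ℝ) := by
    rw [Real.coe_toNNReal _ (sq_nonneg σ)]; positivity
  have hσ0 : σ ≠ 0 := ne_of_gt hσ
  have hsπ : Real.sqrt π ≠ 0 := ne_of_gt (Real.sqrt_pos.mpr pi_pos)
  have hval : ∀ t : ℝ, lam t = (|μ1 - μ0| / σ) / Real.sqrt π := by
    intro t
    rw [hlam t]
    set G := gaussianReal ((1 - t) * μ0 + t * μ1) (Real.toNNReal (σ^2)) with hG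
    have hpt : ∀ x y : ℝ,
        |(μ1 - μ0) * (x - (μ0 + μ1)/2) / σ^2 - (μ1 - μ0) * (y - (μ0 + μ1)/2) / σ^2|
          = (|μ1 - μ0| / σ^2) * |x - y| := by
      intro x y
      rw [show (μ1 - μ0) * (x - (μ0 + μ1)/2) / σ^2 - (μ1 - μ0) * (y - (μ0 + μ1)/2) / σ^2
          = ((μ1 - μ0) / σ^2) * (x - y) from by field_simp; ring,
        abs_mul, abs_div, abs_of_nonneg (sq_nonneg σ)]
    have hsqv : Real.sqrt ((Real.toNNReal (σ^2) : ℝ≥0) : ℝ) = σ := by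
      rw [Real.coe_toNNReal _ (sq_nonneg σ), Real.sqrt_sq (le_of_lt hσ)]
    calc (1/2) * ∫ x, ∫ y,
        |(μ1 - μ0) * (x - (μ0 + μ1)/2) / σ^2 - (μ1 - μ0) * (y - (μ0 + μ1)/2) / σ^2| ∂G ∂G
        = (1/2) * ∫ x, (|μ1 - μ0| / σ^2) * ∫ y, |x - y| ∂G ∂G := by
          congr 1
          refine integral_congr_ae (Filter.Eventually.of_forall fun x => ?_)
          simp_rw [hpt x]
          exact integral_const_mul _ _
    _ = (1/2) * ((|μ1 - μ0| / σ^2) * ∫ x, ∫ y, |x - y| ∂G ∂G) := by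
          rw [integral_const_mul]
    _ = (1/2) * ((|μ1 - μ0| / σ^2) * (2 * σ / Real.sqrt π)) := by
          rw [hG, core_integral _ hσ2, hsqv]
    _ = (|μ1 - μ0| / σ) / Real.sqrt π := by
          field_simp
  refine ⟨fun t _ => hval t, ?_⟩
  simp only [hval]
  rw [intervalIntegral.integral_const]
  simp
end

section
/- For independent random variables X ~ π_t and X' ~ π_{t'}, the expected Metropolis acceptance probability satisfies the identity 1 - r(t,t') = E[exp(min{0, A_{t,t'}(X,X')})] = E[exp(-|Ã|/2)] / E[exp(-Ã/2)], where Ã = A_{t,t'}(X̃, X̃') with X̃, X̃' i.i.d. from the midpoint density π̃_{1/2} ∝ exp((W_t + W_{t'})/2). -/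
open MeasureTheory
open scoped ENNReal NNReal

/-- The normalized probability measure with density proportional to `exp(W)` w.r.t. `μ`. -/
noncomputable def gibbsMeasure {X : Type*} [MeasurableSpace X]
    (μ : Measure X) (W : X → ℝ) : Measure X :=
  μ.withDensity (fun x => ENNReal.ofReal (Real.exp (W x) / ∫ y, Real.exp (W y) ∂μ))

lemma integral_gibbs {X : Type*} [MeasurableSpace X] (μ : Measure X) (V : X → ℝ)
    (hV : AEMeasurable (fun x => Real.exp (V x)) μ) (g : X → ℝ) :
    (∫ x, g x ∂(gibbsMeasure μ V))
      = ∫ x, (Real.exp (V x) / ∫ y, Real.exp (V y) ∂μ) * g x ∂μ := by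
  unfold gibbsMeasure
  set Z := ∫ y, Real.exp (V y) ∂μ with hZ
  have hZnn : 0 ≤ Z := integral_nonneg fun y => (Real.exp_pos _).le
  have hd : AEMeasurable (fun x => (Real.exp (V x) / Z).toNNReal) μ :=
    measurable_real_toNNReal.comp_aemeasurable (hV.div_const Z)
  have : (fun x => ENNReal.ofReal (Real.exp (V x) / Z))
      = fun x => ((Real.exp (V x) / Z).toNNReal : ℝ≥0∞) := rfl
  rw [this, integral_withDensity_eq_integral_smul₀ hd g]
  refine integral_congr_ae (Filter.Eventually.of_forall fun x => ?_)
  have h0 : 0 ≤ Real.exp (V x) / Z := div_nonneg (Real.exp_pos _).le hZnn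
  simp [NNReal.smul_def, Real.coe_toNNReal _ h0]

private lemma aux1 (a b c d e f Z' Zm : ℝ) (ha : a ≠ 0) (hZ' : Z' ≠ 0) (hZm : Zm ≠ 0)
    (h : a * (b * e) = c * (d * f)) :
    (b / Z') * e = (Zm * c / (Z' * a)) * ((d / Zm) * f) := by
  field_simp
  linear_combination h

private lemma aux2 (a b c d g Zm : ℝ) (hc : c ≠ 0) (hZm : Zm ≠ 0)
    (h : c * (d * g) = a * b) :
    (d / Zm) * g = (a / (c * Zm)) * b := by
  field_simp
  linear_combination h

private lemma aux3 (fx mx I Z Z' Zm : ℝ) (hfx : fx ≠ 0) (hZ : Z ≠ 0) (hZ' : Z' ≠ 0)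
    (hZm : Zm ≠ 0) :
    (fx / Z) * ((Zm * mx / (Z' * fx)) * I) = (Zm ^ 2 / (Z * Z')) * ((mx / Zm) * I) := by
  field_simp

private lemma aux4 (fx mx Zm Z' : ℝ) (hmx : mx ≠ 0) (hZm : Zm ≠ 0) :
    (mx / Zm) * ((fx / (mx * Zm)) * Z') = (Z' / Zm ^ 2) * fx := by
  field_simp

private lemma aux5 (N Z Z' Zm : ℝ) (hZ : Z ≠ 0) (hZ' : Z' ≠ 0) (hZm : Zm ≠ 0) :
    (Zm ^ 2 / (Z * Z')) * N = N / (Z * Z' / Zm ^ 2) := by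
  field_simp

/-- For independent `X ~ π_t ∝ exp(W)` and `X' ~ π_{t'} ∝ exp(W')`, the expected
acceptance probability satisfies `1 - r = E[exp(min{0, A(X,X')})]
= E[exp(-|Ã|/2)] / E[exp(-Ã/2)]` where `Ã = A(X̃,X̃')` with `X̃, X̃'` i.i.d. from the
midpoint density `π̃ ∝ exp((W+W')/2)`. -/
theorem acceptance_midpoint_identity
    {X : Type*} [MeasurableSpace X] (μ : Measure X) (W W' : X → ℝ)
    (hW : Integrable (fun x => Real.exp (W x)) μ)
    (hW' : Integrable (fun x => Real.exp (W' x)) μ)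
    (hmid : Integrable (fun x => Real.exp ((W x + W' x) / 2)) μ)
    (hZ : 0 < ∫ x, Real.exp (W x) ∂μ)
    (hZ' : 0 < ∫ x, Real.exp (W' x) ∂μ)
    (hZm : 0 < ∫ x, Real.exp ((W x + W' x) / 2) ∂μ)
    (A : X → X → ℝ) (hA : ∀ x y, A x y = (W' x - W x) - (W' y - W y))
    (r : ℝ)
    (hr : r = 1 - ∫ x, ∫ y, min 1 (Real.exp (A x y))
        ∂(gibbsMeasure μ W') ∂(gibbsMeasure μ W)) :
    (1 - r = ∫ x, ∫ y, Real.exp (min 0 (A x y))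
        ∂(gibbsMeasure μ W') ∂(gibbsMeasure μ W)) ∧
    (1 - r =
      (∫ x, ∫ y, Real.exp (-|A x y| / 2)
          ∂(gibbsMeasure μ (fun z => (W z + W' z) / 2))
          ∂(gibbsMeasure μ (fun z => (W z + W' z) / 2))) /
      (∫ x, ∫ y, Real.exp (-(A x y) / 2)
          ∂(gibbsMeasure μ (fun z => (W z + W' z) / 2))
          ∂(gibbsMeasure μ (fun z => (W z + W' z) / 2)))) := by
  have hE : AEMeasurable (fun x => Real.exp (W x)) μ := hW.aestronglyMeasurable.aemeasurable
  have hE' : AEMeasurable (fun x => Real.exp (W' x)) μ := hW'.aestronglyMeasurable.aemeasurable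
  have hEm : AEMeasurable (fun x => Real.exp ((W x + W' x) / 2)) μ :=
    hmid.aestronglyMeasurable.aemeasurable
  set M : X → ℝ := fun z => (W z + W' z) / 2 with hM
  set Z := ∫ x, Real.exp (W x) ∂μ with hZdef
  set Z' := ∫ x, Real.exp (W' x) ∂μ with hZ'def
  set Zm := ∫ x, Real.exp (M x) ∂μ with hZmdef
  have hZne : Z ≠ 0 := ne_of_gt hZ
  have hZ'ne : Z' ≠ 0 := ne_of_gt hZ'
  have hZmne : Zm ≠ 0 := ne_of_gt hZm
  -- first conjunct
  have hmin : ∀ a : ℝ, min 1 (Real.exp a) = Real.exp (min 0 a) := by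
    intro a
    rw [show (1:ℝ) = Real.exp 0 by simp]
    exact (Real.exp_monotone.map_min).symm
  have h1 : 1 - r = ∫ x, ∫ y, Real.exp (min 0 (A x y))
      ∂(gibbsMeasure μ W') ∂(gibbsMeasure μ W) := by
    rw [hr, sub_sub_cancel]
    simp only [hmin]
  -- pointwise identities
  have hptN : ∀ x y, Real.exp (W x) * (Real.exp (W' y) * Real.exp (min 0 (A x y)))
      = Real.exp (M x) * (Real.exp (M y) * Real.exp (-|A x y| / 2)) := by
    intro x y
    have habs : min 0 (A x y) = A x y / 2 - |A x y| / 2 := by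
      rcases abs_cases (A x y) with ⟨h1', h2'⟩ | ⟨h1', h2'⟩
      · rw [min_eq_left h2', h1']; ring
      · rw [min_eq_right h2'.le, h1']; ring
    rw [← Real.exp_add, ← Real.exp_add, ← Real.exp_add, ← Real.exp_add, habs]
    congr 1
    simp only [hM, hA]
    ring
  have hptD : ∀ x y, Real.exp (M x) * (Real.exp (M y) * Real.exp (-(A x y) / 2))
      = Real.exp (W x) * Real.exp (W' y) := by
    intro x y
    rw [← Real.exp_add, ← Real.exp_add, ← Real.exp_add]
    congr 1
    simp only [hM, hA]
    ring
  set IN : X → ℝ := fun x => ∫ y, (Real.exp (M y) / Zm) * Real.exp (-|A x y| / 2) ∂μ with hIN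
  -- reduce 1 - r to μ-integrals
  have hmain : 1 - r = (Zm ^ 2 / (Z * Z')) *
      ∫ x, (Real.exp (M x) / Zm) * IN x ∂μ := by
    rw [h1, integral_gibbs μ W hE]
    simp only [integral_gibbs μ W' hE']
    rw [← hZdef]
    simp only [← hZ'def]
    rw [← integral_const_mul]
    refine integral_congr_ae (Filter.Eventually.of_forall fun x => ?_)
    have hfx : Real.exp (W x) ≠ 0 := (Real.exp_pos _).ne'
    dsimp only
    rw [show (∫ y, (Real.exp (W' y) / Z') * Real.exp (min 0 (A x y)) ∂μ)
        = ∫ y, (Zm * Real.exp (M x) / (Z' * Real.exp (W x))) *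
            ((Real.exp (M y) / Zm) * Real.exp (-|A x y| / 2)) ∂μ from
      integral_congr_ae (Filter.Eventually.of_forall fun y =>
        aux1 _ _ _ _ _ _ _ _ hfx hZ'ne hZmne (hptN x y))]
    rw [integral_const_mul, hIN]
    exact aux3 _ _ _ _ _ _ hfx hZne hZ'ne hZmne
  -- denominator
  have hDval : (∫ x, ∫ y, Real.exp (-(A x y) / 2)
      ∂(gibbsMeasure μ M) ∂(gibbsMeasure μ M)) = Z * Z' / Zm ^ 2 := by
    rw [integral_gibbs μ M hEm]
    simp only [integral_gibbs μ M hEm]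
    simp only [← hZmdef]
    have h2 : ∀ x, (Real.exp (M x) / Zm) *
        (∫ y, (Real.exp (M y) / Zm) * Real.exp (-(A x y) / 2) ∂μ)
        = (Z' / Zm ^ 2) * Real.exp (W x) := by
      intro x
      have hmx : Real.exp (M x) ≠ 0 := (Real.exp_pos _).ne'
      rw [show (∫ y, (Real.exp (M y) / Zm) * Real.exp (-(A x y) / 2) ∂μ)
          = ∫ y, (Real.exp (W x) / (Real.exp (M x) * Zm)) * Real.exp (W' y) ∂μ from
        integral_congr_ae (Filter.Eventually.of_forall fun y =>
          aux2 _ _ _ _ _ _ hmx hZmne (hptD x y))]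
      rw [integral_const_mul, ← hZ'def]
      exact aux4 _ _ _ _ hmx hZmne
    rw [show (∫ x, (Real.exp (M x) / Zm) *
        (∫ y, (Real.exp (M y) / Zm) * Real.exp (-(A x y) / 2) ∂μ) ∂μ)
        = ∫ x, (Z' / Zm ^ 2) * Real.exp (W x) ∂μ from
      integral_congr_ae (Filter.Eventually.of_forall fun x => h2 x)]
    rw [integral_const_mul, ← hZdef]
    ring
  -- numerator
  have hNval : (∫ x, ∫ y, Real.exp (-|A x y| / 2)
      ∂(gibbsMeasure μ M) ∂(gibbsMeasure μ M)) = ∫ x, (Real.exp (M x) / Zm) * IN x ∂μ := by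
    rw [integral_gibbs μ M hEm]
    simp only [integral_gibbs μ M hEm]
    rfl
  refine ⟨h1, ?_⟩
  rw [hNval, hDval, hmain]
  exact aux5 _ _ _ _ hZne hZ'ne hZmne
end

section
/- For an annealing path family with log-densities W_t^φ, the sum of symmetric KL divergences along a schedule telescopes: Σ_{n=0}^{N-1} SKL(π_{t_n}^φ, π_{t_{n+1}}^φ) = E[J_0^φ(X_0)] + Σ_{n=1}^{N-1} E[J_n^φ(X_n)] + E[J_N^φ(X_N)], where J_0^φ = W_{t_0}^φ - W_{t_1}^φ, J_n^φ = 2W_{t_n}^φ - W_{t_{n+1}}^φ - W_{t_{n-1}}^φ for 1 ≤ n ≤ N-1, J_N^φ = W_{t_N}^φ - W_{t_{N-1}}^φ, and X_n ~ π_{t_n}^φ. -/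
open MeasureTheory

lemma tele_aux (f : ℕ → ℕ → ℝ) : ∀ N : ℕ, 1 ≤ N →
    ∑ n ∈ Finset.range N, ((f n n - f n (n+1)) + (f (n+1) (n+1) - f (n+1) n))
    = (f 0 0 - f 0 1) +
      (∑ n ∈ Finset.Ico 1 N, (2 * f n n - f n (n+1) - f n (n-1))) +
      (f N N - f N (N-1)) := by
  intro N
  induction N with
  | zero => omega
  | succ N ih =>
    intro _
    rcases Nat.eq_zero_or_pos N with h | h
    · subst h; simp [Finset.sum_range_one]
    · rw [Finset.sum_range_succ, ih h, Finset.sum_Ico_succ_top h]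
      have h1 : N + 1 - 1 = N := by omega
      rw [h1]
      ring

/-- The sum of symmetric KL divergences along a schedule telescopes:
`Σ_{n=0}^{N-1} SKL(π_n, π_{n+1}) = E[J_0(X_0)] + Σ_{n=1}^{N-1} E[J_n(X_n)] + E[J_N(X_N)]`
with `J_0 = W_0 - W_1`, `J_n = 2W_n - W_{n+1} - W_{n-1}`, `J_N = W_N - W_{N-1}`,
where `π_n ∝ exp(W_n)` and `X_n ~ π_n`, and `SKL(p,q) = E_p[log(p/q)] + E_q[log(q/p)]`. -/
theorem skl_sum_telescopes
    {X : Type*} [MeasurableSpace X] (μ : Measure X) (N : ℕ) (hN : 1 ≤ N)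
    (W : ℕ → X → ℝ) (Z : ℕ → ℝ)
    (hZ : ∀ n, Z n = ∫ x, Real.exp (W n x) ∂μ) (hZpos : ∀ n, 0 < Z n)
    (π : ℕ → Measure X)
    (hπ : ∀ n, π n = μ.withDensity fun x => ENNReal.ofReal (Real.exp (W n x) / Z n))
    (hexp : ∀ n, Integrable (fun x => Real.exp (W n x)) μ)
    (hint : ∀ n m : ℕ, Integrable (W m) (π n)) :
    (∑ n ∈ Finset.range N,
      ((∫ x, Real.log ((Real.exp (W n x) / Z n) / (Real.exp (W (n+1) x) / Z (n+1)))
          ∂(π n)) +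
       (∫ x, Real.log ((Real.exp (W (n+1) x) / Z (n+1)) / (Real.exp (W n x) / Z n))
          ∂(π (n+1)))))
    = (∫ x, (W 0 x - W 1 x) ∂(π 0)) +
      (∑ n ∈ Finset.Ico 1 N, ∫ x, (2 * W n x - W (n+1) x - W (n-1) x) ∂(π n)) +
      (∫ x, (W N x - W (N-1) x) ∂(π N)) := by
  have hprob : ∀ n, IsProbabilityMeasure (π n) := by
    intro n
    rw [hπ n]
    constructor
    rw [withDensity_apply _ MeasurableSet.univ, Measure.restrict_univ]
    have hint' : Integrable (fun x => Real.exp (W n x) / Z n) μ := (hexp n).div_const _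
    have hnn : 0 ≤ᵐ[μ] fun x => Real.exp (W n x) / Z n :=
      Filter.Eventually.of_forall fun x => div_nonneg (Real.exp_pos _).le (hZpos n).le
    rw [← ofReal_integral_eq_lintegral_ofReal hint' hnn]
    have : ∫ x, Real.exp (W n x) / Z n ∂μ = 1 := by
      rw [integral_div, ← hZ n, div_self (hZpos n).ne']
    rw [this]; simp
  set f : ℕ → ℕ → ℝ := fun n m => ∫ x, W m x ∂(π n) with hf
  have key : ∀ n m : ℕ,
      (∫ x, Real.log ((Real.exp (W n x) / Z n) / (Real.exp (W m x) / Z m)) ∂(π n))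
      = (f n n - f n m) + (Real.log (Z m) - Real.log (Z n)) := by
    intro n m
    have heq : ∀ x, Real.log ((Real.exp (W n x) / Z n) / (Real.exp (W m x) / Z m))
        = (W n x - W m x) + (Real.log (Z m) - Real.log (Z n)) := by
      intro x
      rw [Real.log_div (div_pos (Real.exp_pos _) (hZpos n)).ne'
          (div_pos (Real.exp_pos _) (hZpos m)).ne',
        Real.log_div (Real.exp_ne_zero _) (hZpos n).ne',
        Real.log_div (Real.exp_ne_zero _) (hZpos m).ne',
        Real.log_exp, Real.log_exp]
      ring
    simp_rw [heq]
    rw [integral_add (f := fun x => W n x - W m x)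
          (g := fun _ => Real.log (Z m) - Real.log (Z n))
          ((hint n n).sub (hint n m)) (integrable_const _),
        integral_sub (f := fun x => W n x) (g := fun x => W m x)
          (hint n n) (hint n m), integral_const]
    have := hprob n
    simp [hf]
  have hmid : ∀ n : ℕ, (∫ x, (2 * W n x - W (n+1) x - W (n-1) x) ∂(π n))
      = 2 * f n n - f n (n+1) - f n (n-1) := by
    intro n
    rw [integral_sub (f := fun x => 2 * W n x - W (n+1) x) (g := fun x => W (n-1) x)
          (((hint n n).const_mul 2).sub (hint n (n+1))) (hint n (n-1)),
        integral_sub (f := fun x => 2 * W n x) (g := fun x => W (n+1) x)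
          ((hint n n).const_mul 2) (hint n (n+1)), MeasureTheory.integral_const_mul]
  have h0 : (∫ x, (W 0 x - W 1 x) ∂(π 0)) = f 0 0 - f 0 1 :=
    integral_sub (f := fun x => W 0 x) (g := fun x => W 1 x) (hint 0 0) (hint 0 1)
  have hNend : (∫ x, (W N x - W (N-1) x) ∂(π N)) = f N N - f N (N-1) :=
    integral_sub (f := fun x => W N x) (g := fun x => W (N-1) x) (hint N N) (hint N (N-1))
  calc (∑ n ∈ Finset.range N,
      ((∫ x, Real.log ((Real.exp (W n x) / Z n) / (Real.exp (W (n+1) x) / Z (n+1)))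
          ∂(π n)) +
       (∫ x, Real.log ((Real.exp (W (n+1) x) / Z (n+1)) / (Real.exp (W n x) / Z n))
          ∂(π (n+1)))))
      = ∑ n ∈ Finset.range N,
          ((f n n - f n (n+1)) + (f (n+1) (n+1) - f (n+1) n)) := by
        refine Finset.sum_congr rfl fun n _ => ?_
        rw [key n (n+1), key (n+1) n]
        ring
    _ = (f 0 0 - f 0 1) +
          (∑ n ∈ Finset.Ico 1 N, (2 * f n n - f n (n+1) - f n (n-1))) +
          (f N N - f N (N-1)) := tele_aux f N hN
    _ = _ := by rw [h0, hNend, Finset.sum_congr rfl fun n _ => (hmid n).symm]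
end

section
/- For the Gaussian linear path example with z = |μ_1 - μ_0|/σ, the asymptotic round trip rate τ_∞ = 1/(2 + 2z/√π) satisfies τ_∞ = Θ(1/z) as z → ∞, while for the Fisher–Rao geodesic path of Gaussians with Λ_F = √2 log(1 + z²/4 + (z/4)√(8+z²)), the rate 1/(2 + 2Λ_F) is Θ(1/log z) as z → ∞. -/
open Filter

/-- For the Gaussian example with `z = |μ₁-μ₀|/σ`: the linear-path asymptotic round
trip rate `1/(2 + 2z/√π)` is `Θ(1/z)` as `z → ∞`, while for the Fisher–Rao geodesic
path with `Λ_F = √2 log(1 + z²/4 + (z/4)√(8+z²))` the rate `1/(2 + 2Λ_F)` is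
`Θ(1/log z)` as `z → ∞`. -/
theorem gaussian_round_trip_asymptotics :
    (∃ c C : ℝ, 0 < c ∧ 0 < C ∧ ∀ᶠ z : ℝ in atTop,
      c * (1 / z) ≤ 1 / (2 + 2 * z / Real.sqrt Real.pi) ∧
      1 / (2 + 2 * z / Real.sqrt Real.pi) ≤ C * (1 / z)) ∧
    (∃ c C : ℝ, 0 < c ∧ 0 < C ∧ ∀ᶠ z : ℝ in atTop,
      c * (1 / Real.log z)
        ≤ 1 / (2 + 2 * (Real.sqrt 2 *
            Real.log (1 + z ^ 2 / 4 + (z / 4) * Real.sqrt (8 + z ^ 2)))) ∧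
      1 / (2 + 2 * (Real.sqrt 2 *
            Real.log (1 + z ^ 2 / 4 + (z / 4) * Real.sqrt (8 + z ^ 2))))
        ≤ C * (1 / Real.log z)) := by
  have hpi1 : (1:ℝ) ≤ Real.sqrt Real.pi := by
    rw [show (1:ℝ) = Real.sqrt 1 by simp]
    exact Real.sqrt_le_sqrt (by linarith [Real.pi_gt_three])
  have hpi2 : Real.sqrt Real.pi ≤ 2 := by
    rw [show (2:ℝ) = Real.sqrt 4 by rw [show (4:ℝ) = 2^2 by norm_num, Real.sqrt_sq]; norm_num]
    exact Real.sqrt_le_sqrt (by linarith [Real.pi_lt_d2])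
  have hs2a : (1:ℝ) ≤ Real.sqrt 2 := by
    rw [show (1:ℝ) = Real.sqrt 1 by simp]
    exact Real.sqrt_le_sqrt (by norm_num)
  have hs2b : Real.sqrt 2 ≤ 2 := by
    nlinarith [Real.sq_sqrt (show (0:ℝ) ≤ 2 by norm_num), Real.sqrt_nonneg 2]
  constructor
  · refine ⟨1/4, 1, by norm_num, by norm_num, ?_⟩
    filter_upwards [eventually_ge_atTop (4:ℝ)] with z hz
    have hz0 : (0:ℝ) < z := by linarith
    have hpipos : (0:ℝ) < Real.sqrt Real.pi := by linarith
    have hdiv_le : 2 * z / Real.sqrt Real.pi ≤ 2 * z := by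
      rw [div_le_iff₀ hpipos]; nlinarith
    have hdiv_ge : z ≤ 2 * z / Real.sqrt Real.pi := by
      rw [le_div_iff₀ hpipos]; nlinarith
    have hD : (0:ℝ) < 2 + 2 * z / Real.sqrt Real.pi := by linarith
    constructor
    · rw [one_div_mul_one_div]
      apply one_div_le_one_div_of_le hD
      linarith
    · rw [one_mul]
      exact one_div_le_one_div_of_le hz0 (by linarith)
  · refine ⟨1/10, 1, by norm_num, by norm_num, ?_⟩
    filter_upwards [eventually_ge_atTop (4:ℝ)] with z hz
    have hz0 : (0:ℝ) < z := by linarith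
    have hAdef : (1:ℝ) + z ^ 2 / 4 + (z / 4) * Real.sqrt (8 + z ^ 2) = 1 + z ^ 2 / 4 + (z / 4) * Real.sqrt (8 + z ^ 2) := rfl
    set A : ℝ := 1 + z ^ 2 / 4 + (z / 4) * Real.sqrt (8 + z ^ 2) with hA
    have hsq : (0:ℝ) ≤ Real.sqrt (8 + z ^ 2) := Real.sqrt_nonneg _
    have hsqle : Real.sqrt (8 + z ^ 2) ≤ z + 3 := by
      rw [show z + 3 = Real.sqrt ((z+3)^2) by rw [Real.sqrt_sq]; linarith]
      exact Real.sqrt_le_sqrt (by nlinarith)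
    have hA_ge : z ≤ A := by
      have h0 : (0:ℝ) ≤ (z/4) * Real.sqrt (8 + z^2) := by positivity
      rw [hA]
      nlinarith [sq_nonneg (z - 2)]
    have hA_le : A ≤ z ^ 2 := by
      have h1 : z / 4 * Real.sqrt (8 + z ^ 2) ≤ z / 4 * (z + 3) :=
        mul_le_mul_of_nonneg_left hsqle (by linarith)
      rw [hA]
      nlinarith
    have hA1 : (1:ℝ) < A := by nlinarith
    have hlogz1 : (1:ℝ) ≤ Real.log z := by
      rw [Real.le_log_iff_exp_le hz0]
      calc Real.exp 1 ≤ 2.7182818286 := (Real.exp_one_lt_d9).le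
        _ ≤ z := by linarith
    have hlogA_ge : Real.log z ≤ Real.log A := Real.log_le_log hz0 hA_ge
    have hlogA_le : Real.log A ≤ 2 * Real.log z := by
      calc Real.log A ≤ Real.log (z ^ 2) := Real.log_le_log (by linarith) hA_le
        _ = 2 * Real.log z := by rw [Real.log_pow]; push_cast; ring
    have hlogA0 : (0:ℝ) ≤ Real.log A := by linarith
    have hD : (0:ℝ) < 2 + 2 * (Real.sqrt 2 * Real.log A) := by nlinarith
    have hlogz0 : (0:ℝ) < Real.log z := by linarith
    constructor
    · rw [one_div_mul_one_div]
      apply one_div_le_one_div_of_le hD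
      nlinarith
    · rw [one_mul]
      apply one_div_le_one_div_of_le hlogz0
      nlinarith
end

section
/- The round trip rate function τ(𝒯_N) = (2 + 2 Σ_{n=0}^{N-1} r_n/(1-r_n))^{-1}, viewed as a function of rejection rates (r_0,...,r_{N-1}) ∈ [0,1)^N with fixed sum Σ r_n = R, is maximized when all rejection rates are equal, r_n = R/N. -/
open Finset Set

lemma convexOn_div_one_sub : ConvexOn ℝ (Set.Ico (0:ℝ) 1) (fun x => x / (1 - x)) := by
  have h1 : ConvexOn ℝ (Set.Ioi (0:ℝ)) fun x : ℝ => x⁻¹ := by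
    have := convexOn_zpow (𝕜 := ℝ) (-1)
    simpa using this
  have h2 : ConvexOn ℝ ((AffineMap.lineMap (1:ℝ) (0:ℝ) : ℝ →ᵃ[ℝ] ℝ) ⁻¹' (Set.Ioi (0:ℝ)))
      ((fun x : ℝ => x⁻¹) ∘ (AffineMap.lineMap (1:ℝ) (0:ℝ) : ℝ →ᵃ[ℝ] ℝ)) :=
    h1.comp_affineMap _
  have hpre : (AffineMap.lineMap (1:ℝ) (0:ℝ) : ℝ →ᵃ[ℝ] ℝ) ⁻¹' (Set.Ioi (0:ℝ)) = Set.Iio 1 := by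
    ext x
    simp only [Set.mem_preimage, AffineMap.lineMap_apply, Set.mem_Ioi, Set.mem_Iio,
      smul_eq_mul, vsub_eq_sub, vadd_eq_add]
    constructor <;> intro h <;> nlinarith
  rw [hpre] at h2
  have h3 : ConvexOn ℝ (Set.Ico (0:ℝ) 1)
      ((fun x : ℝ => x⁻¹) ∘ (AffineMap.lineMap (1:ℝ) (0:ℝ) : ℝ →ᵃ[ℝ] ℝ)) :=
    h2.subset (fun x hx => hx.2) (convex_Ico 0 1)
  have h4 := h3.add_const (-1)
  refine h4.congr fun x hx => ?_
  have hx1 : (1:ℝ) - x ≠ 0 := ne_of_gt (by linarith [hx.2])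
  have hline : (AffineMap.lineMap (1:ℝ) (0:ℝ) : ℝ →ᵃ[ℝ] ℝ) x = 1 - x := by
    simp [AffineMap.lineMap_apply]; ring
  show ((fun y : ℝ => y⁻¹) ∘ (AffineMap.lineMap (1:ℝ) (0:ℝ) : ℝ →ᵃ[ℝ] ℝ)) x + (-1) = x / (1 - x)
  rw [Function.comp_apply, hline]
  field_simp
  ring

/-- The round trip rate `τ(r) = (2 + 2 Σ_n r_n/(1-r_n))⁻¹`, as a function of rejection
rates `r_n ∈ [0,1)` with fixed sum `Σ r_n = R`, is maximized at the equal allocation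
`r_n = R/N`. -/
theorem round_trip_rate_maximized_at_equal_rejections
    (N : ℕ) (hN : 0 < N) (r : ℕ → ℝ)
    (hr : ∀ n < N, r n ∈ Set.Ico (0:ℝ) 1)
    (R : ℝ) (hR : ∑ n ∈ Finset.range N, r n = R) :
    (2 + 2 * ∑ n ∈ Finset.range N, r n / (1 - r n))⁻¹
      ≤ (2 + 2 * (N : ℝ) * ((R / N) / (1 - R / N)))⁻¹ := by
  have hNpos : (0:ℝ) < N := Nat.cast_pos.mpr hN
  -- Jensen
  have hjensen := convexOn_div_one_sub.map_sum_le (t := Finset.range N)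
    (w := fun _ => (N:ℝ)⁻¹) (p := r)
    (fun i _ => by positivity)
    (by simp [Finset.sum_const]; field_simp)
    (fun i hi => hr i (Finset.mem_range.mp hi))
  have hsum : ∑ i ∈ Finset.range N, (N:ℝ)⁻¹ • r i = R / N := by
    rw [← Finset.smul_sum, hR, smul_eq_mul]; ring
  rw [hsum] at hjensen
  have hkey : (N:ℝ) * ((R / N) / (1 - R / N)) ≤ ∑ n ∈ Finset.range N, r n / (1 - r n) := by
    calc (N:ℝ) * ((R / N) / (1 - R / N))
        ≤ (N:ℝ) * ∑ i ∈ Finset.range N, (N:ℝ)⁻¹ • (r i / (1 - r i)) := by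
          exact mul_le_mul_of_nonneg_left hjensen (le_of_lt hNpos)
      _ = ∑ n ∈ Finset.range N, r n / (1 - r n) := by
          rw [← Finset.smul_sum, smul_eq_mul, ← mul_assoc, mul_inv_cancel₀ hNpos.ne',
            one_mul]
  have hRN : R / N ∈ Set.Ico (0:ℝ) 1 := by
    constructor
    · apply div_nonneg _ hNpos.le
      rw [← hR]; exact Finset.sum_nonneg fun i hi => (hr i (Finset.mem_range.mp hi)).1
    · rw [div_lt_one hNpos, ← hR]
      calc ∑ n ∈ Finset.range N, r n < ∑ n ∈ Finset.range N, 1 := by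
            apply Finset.sum_lt_sum_of_nonempty ⟨0, Finset.mem_range.mpr hN⟩
            exact fun i hi => (hr i (Finset.mem_range.mp hi)).2
        _ = N := by simp
  have hden : (0:ℝ) < 2 + 2 * (N:ℝ) * ((R / N) / (1 - R / N)) := by
    have h1 : 0 ≤ (R / N) / (1 - R / N) :=
      div_nonneg hRN.1 (by linarith [hRN.2])
    positivity
  apply inv_anti₀ hden
  linarith
end
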